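/- For every natural number m and positive integer n, the Hankel determinant det(C_{i+j+m})_{i,j=0}^{n-1} equals the product over all pairs 1 ≤ i ≤ j ≤ m−1 of (2n+i+j)/(i+j). -/

import Mathlib

open Matrix Finset

noncomputable def mnr {n : ℕ} (P : Matrix (Fin n) (Fin n) ℚ) (Q : Matrix (Fin n) (Fin 2) ℚ)
    (R : Matrix (Fin 2) (Fin n) ℚ) (S : Matrix (Fin 2) (Fin 2) ℚ) (p q : Fin 2) : ℚ :=
  (fromBlocks P (Matrix.of fun i (_ : Fin 1) => Q i q)
    (Matrix.of fun (_ : Fin 1) j => R p j) (Matrix.of fun _ _ => S p q)).det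

lemma blockDJ {n : ℕ} (P : Matrix (Fin n) (Fin n) ℚ) (Q : Matrix (Fin n) (Fin 2) ℚ)
    (R : Matrix (Fin 2) (Fin n) ℚ) (S : Matrix (Fin 2) (Fin 2) ℚ) (hP : IsUnit P.det) :
    (fromBlocks P Q R S).det * P.det =
      mnr P Q R S 0 0 * mnr P Q R S 1 1 - mnr P Q R S 0 1 * mnr P Q R S 1 0 := by
  haveI : Invertible P := P.invertibleOfIsUnitDet hP
  have hmnr : ∀ p q : Fin 2, mnr P Q R S p q = P.det * (S p q - (R * ⅟P * Q) p q) := by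
    intro p q
    rw [mnr, det_fromBlocks₁₁]
    congr 1
    rw [det_fin_one]
    simp [Matrix.mul_apply, Matrix.sub_apply, Finset.mul_sum, Finset.sum_mul]
  rw [det_fromBlocks₁₁, det_fin_two, hmnr, hmnr, hmnr, hmnr]
  simp only [Matrix.sub_apply]
  ring

noncomputable def uEq (n : ℕ) : (Fin n ⊕ Fin 1) ≃ Fin (n+1) :=
  Equiv.ofBijective (Sum.elim (fun i => ⟨i.1+1, by omega⟩) (fun _ => ⟨0, by omega⟩))
    (by
      rw [Fintype.bijective_iff_injective_and_card]
      refine ⟨?_, by simp⟩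
      rintro (a|a) (b|b) h <;>
        first
        | (simp only [Sum.elim_inl, Sum.elim_inr, Fin.mk.injEq] at h
           first
           | (have ha := a.2; have hb := b.2; omega)
           | (have ha := a.2; omega)
           | (have hb := b.2; omega))
        | (congr 1
           first
           | (have := Fin.ext_iff (a := a) (b := b)
              simp only [Sum.elim_inl, Sum.elim_inr, Fin.mk.injEq] at h
              omega)
           | (apply Subsingleton.elim))
      )

noncomputable def vEq (n : ℕ) : (Fin n ⊕ Fin 1) ≃ Fin (n+1) :=
  Equiv.ofBijective (Sum.elim (fun i => ⟨i.1, by omega⟩) (fun _ => ⟨n, by omega⟩))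
    (by
      rw [Fintype.bijective_iff_injective_and_card]
      refine ⟨?_, by simp⟩
      rintro (a|a) (b|b) h <;>
        simp only [Sum.elim_inl, Sum.elim_inr, Fin.mk.injEq] at h
      · exact congrArg _ (Fin.ext h)
      · exact absurd h (by have := a.2; omega)
      · exact absurd h (by have := b.2; omega)
      · exact congrArg _ (Subsingleton.elim _ _))

noncomputable def eEq (n : ℕ) : (Fin n ⊕ Fin 2) ≃ Fin (n+2) :=
  Equiv.ofBijective (Sum.elim (fun i => ⟨i.1+1, by omega⟩)
      (fun p => ![(⟨0, by omega⟩ : Fin (n+2)), ⟨n+1, by omega⟩] p))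
    (by
      rw [Fintype.bijective_iff_injective_and_card]
      refine ⟨?_, by simp⟩
      rintro (a|a) (b|b) h
      · simp only [Sum.elim_inl, Fin.mk.injEq] at h
        exact congrArg _ (Fin.ext (by omega))
      · fin_cases b <;> simp [Fin.ext_iff] at h <;> (have := a.2; omega)
      · fin_cases a <;> simp [Fin.ext_iff] at h <;> (have := b.2; omega)
      · fin_cases a <;> fin_cases b <;> simp_all [Fin.ext_iff])

lemma uv_rot (n : ℕ) : ((vEq n).symm.trans ((uEq n).trans (vEq n).symm)).trans (vEq n)
    = (finRotate (n+1) : Equiv.Perm (Fin (n+1))) := by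
  apply Equiv.ext
  intro x
  rcases (vEq n).surjective x with ⟨y, rfl⟩
  simp only [Equiv.trans_apply, Equiv.symm_apply_apply, Equiv.apply_symm_apply]
  rcases y with i | p
  · show _ = finRotate (n+1) ((vEq n) (Sum.inl i))
    rw [finRotate_succ_apply]
    show (⟨i.1+1, by omega⟩ : Fin (n+1)) = (⟨i.1, by omega⟩ : Fin (n+1)) + 1
    apply Fin.ext
    rw [Fin.val_add_one_of_lt (by simp only [Fin.lt_def, Fin.val_last]; exact i.2)]
  · show _ = finRotate (n+1) ((vEq n) (Sum.inr p))
    rw [finRotate_succ_apply]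
    show (⟨0, by omega⟩ : Fin (n+1)) = (⟨n, by omega⟩ : Fin (n+1)) + 1
    rw [show (⟨n, by omega⟩ : Fin (n+1)) = Fin.last n from rfl, Fin.last_add_one]
    rfl

lemma det_sub_uv {n : ℕ} (M : Matrix (Fin (n+1)) (Fin (n+1)) ℚ) :
    (M.submatrix (uEq n) (vEq n)).det = (-1)^n * M.det := by
  have key : M.submatrix (uEq n) (vEq n)
      = (M.submatrix (vEq n) (vEq n)).submatrix ((uEq n).trans (vEq n).symm) id := by
    ext i j; simp [Matrix.submatrix_apply]
  rw [key, Matrix.det_permute, Matrix.det_submatrix_equiv_self]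
  congr 1
  have := Equiv.Perm.sign_symm_trans_trans ((uEq n).trans (vEq n).symm) (vEq n)
  rw [uv_rot n, sign_finRotate] at this
  rw [← this]
  push_cast
  norm_num

lemma det_sub_vu {n : ℕ} (M : Matrix (Fin (n+1)) (Fin (n+1)) ℚ) :
    (M.submatrix (vEq n) (uEq n)).det = (-1)^n * M.det := by
  have h := det_sub_uv (M := Mᵀ)
  rw [← Matrix.det_transpose (M.submatrix (vEq n) (uEq n)), Matrix.transpose_submatrix]
  rw [h, Matrix.det_transpose]

noncomputable def Hk (m n : ℕ) : Matrix (Fin n) (Fin n) ℚ :=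
  Matrix.of fun i j => (catalan (i + j + m) : ℚ)

lemma hankelDJ (m n : ℕ) (h : (Hk (m+2) n).det ≠ 0) :
    (Hk m (n+2)).det * (Hk (m+2) n).det
      = (Hk m (n+1)).det * (Hk (m+2) (n+1)).det - (Hk (m+1) (n+1)).det ^ 2 := by
  set A := Hk m (n+2) with hA
  set P : Matrix (Fin n) (Fin n) ℚ := Matrix.of fun i j => A (eEq n (Sum.inl i)) (eEq n (Sum.inl j)) with hP
  set Q : Matrix (Fin n) (Fin 2) ℚ := Matrix.of fun i p => A (eEq n (Sum.inl i)) (eEq n (Sum.inr p)) with hQ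
  set R : Matrix (Fin 2) (Fin n) ℚ := Matrix.of fun p j => A (eEq n (Sum.inr p)) (eEq n (Sum.inl j)) with hR
  set S : Matrix (Fin 2) (Fin 2) ℚ := Matrix.of fun p q => A (eEq n (Sum.inr p)) (eEq n (Sum.inr q)) with hS
  have hPH : P = Hk (m+2) n := by
    ext i j
    show (catalan _ : ℚ) = (catalan _ : ℚ)
    congr 2
    show (i:ℕ)+1 + ((j:ℕ)+1) + m = i + j + (m+2)
    ring
  have hblock : A.det = (Matrix.fromBlocks P Q R S).det := by
    rw [← Matrix.det_submatrix_equiv_self (eEq n) A]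
    congr 1
    ext x y
    rcases x with i|p <;> rcases y with j|q <;> rfl
  -- the four minors
  have h00 : mnr P Q R S 0 0 = (Hk m (n+1)).det := by
    rw [mnr, ← Matrix.det_submatrix_equiv_self (uEq n) (Hk m (n+1))]
    congr 1
    ext x y
    rcases x with i|p <;> rcases y with j|q <;>
      (show (catalan _ : ℚ) = (catalan _ : ℚ); congr 2) <;>
      simp [uEq, eEq, Hk, Equiv.ofBijective_apply] <;> ring
  have h11 : mnr P Q R S 1 1 = (Hk (m+2) (n+1)).det := by
    rw [mnr, ← Matrix.det_submatrix_equiv_self (vEq n) (Hk (m+2) (n+1))]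
    congr 1
    ext x y
    rcases x with i|p <;> rcases y with j|q <;>
      (show (catalan _ : ℚ) = (catalan _ : ℚ); congr 2) <;>
      simp [vEq, eEq, Hk, Equiv.ofBijective_apply] <;> ring
  have h01 : mnr P Q R S 0 1 = (-1)^n * (Hk (m+1) (n+1)).det := by
    rw [mnr, ← det_sub_uv (Hk (m+1) (n+1))]
    congr 1
    ext x y
    rcases x with i|p <;> rcases y with j|q <;>
      (show (catalan _ : ℚ) = (catalan _ : ℚ); congr 2) <;>
      simp [uEq, vEq, eEq, Hk, Equiv.ofBijective_apply] <;> ring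
  have h10 : mnr P Q R S 1 0 = (-1)^n * (Hk (m+1) (n+1)).det := by
    rw [mnr, ← det_sub_vu (Hk (m+1) (n+1))]
    congr 1
    ext x y
    rcases x with i|p <;> rcases y with j|q <;>
      (show (catalan _ : ℚ) = (catalan _ : ℚ); congr 2) <;>
      simp [uEq, vEq, eEq, Hk, Equiv.ofBijective_apply] <;> ring
  have key := blockDJ P Q R S (by rw [hPH]; exact isUnit_iff_ne_zero.2 h)
  rw [hblock, hPH] at *
  rw [key, h00, h11, h01, h10]
  have hs : ((-1:ℚ))^n * ((-1:ℚ))^n = 1 := by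
    rw [← pow_add]
    exact Even.neg_one_pow ⟨n, rfl⟩
  nlinarith [hs]

def NG (m : ℕ) (c : ℚ) : ℚ := ∏ i ∈ Icc 1 m, (c + i + m)

lemma Icc_prod_bot (a b : ℕ) (h : a ≤ b) (f : ℕ → ℚ) :
    ∏ s ∈ Icc a b, f s = f a * ∏ s ∈ Icc (a+1) b, f s := by
  rw [← Finset.Ico_add_one_right_eq_Icc, Finset.prod_eq_prod_Ico_succ_bot (by omega), Finset.Ico_add_one_right_eq_Icc]

lemma NG_eq (m : ℕ) (c : ℚ) : NG m c = ∏ s ∈ Icc (1+m) (m+m), (c + s) := by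
  rw [NG, ← Finset.map_add_right_Icc 1 m m, Finset.prod_map]
  apply Finset.prod_congr rfl
  intro i _
  simp only [addRightEmbedding_apply]
  push_cast
  ring

lemma NG_rec (m : ℕ) (c : ℚ) :
    NG (m+1) c * (c + ((m:ℚ)+1)) = NG m c * ((c + (2*(m:ℚ)+1)) * (c + (2*(m:ℚ)+2))) := by
  rw [NG_eq, NG_eq]
  have e1 : ∏ s ∈ Icc (m+1) (m+m+2), (c + (s:ℚ))
      = (c + ((m+1:ℕ):ℚ)) * ∏ s ∈ Icc (m+2) (m+m+2), (c + (s:ℚ)) := by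
    rw [Icc_prod_bot (m+1) (m+m+2) (by omega)]
  have e2 : ∏ s ∈ Icc (m+1) (m+m+2), (c + (s:ℚ))
      = ((∏ s ∈ Icc (m+1) (m+m), (c + (s:ℚ))) * (c + ((m+m+1:ℕ):ℚ)))
          * (c + ((m+m+2:ℕ):ℚ)) := by
    rw [show m+m+2 = (m+m+1)+1 from rfl, Finset.prod_Icc_succ_top (by omega),
      show m+m+1 = (m+m)+1 from rfl, Finset.prod_Icc_succ_top (by omega)]
  rw [show 1+(m+1) = m+2 from by omega, show (m+1)+(m+1) = m+m+2 from by omega,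
    show 1+m = m+1 from by omega]
  have := e1.symm.trans e2
  push_cast at this ⊢
  linear_combination this

def Rq (m : ℕ) (x : ℚ) : ℚ := ∏ i ∈ Icc 1 m, (2*x + i + m)/((i:ℚ) + m)

def Pq (m : ℕ) (x : ℚ) : ℚ :=
  ∏ i ∈ Icc 1 (m-1), ∏ j ∈ Icc i (m-1), (2*x + i + j)/((i:ℚ) + j)

lemma Rq_eq (m : ℕ) (x : ℚ) : Rq m x = NG m (2*x) / NG m 0 := by
  rw [Rq, NG, NG, ← Finset.prod_div_distrib]
  exact Finset.prod_congr rfl fun i _ => by rw [zero_add]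

lemma NG_pos (m : ℕ) {c : ℚ} (h : 0 ≤ c) : 0 < NG m c := by
  rw [NG]
  apply Finset.prod_pos
  intro i hi
  have h1 : 1 ≤ i := (Finset.mem_Icc.1 hi).1
  have : (1:ℚ) ≤ (i:ℚ) := by exact_mod_cast h1
  have : (0:ℚ) ≤ (m:ℚ) := Nat.cast_nonneg m
  linarith

lemma Rq_pos (m : ℕ) {x : ℚ} (h : 0 ≤ x) : 0 < Rq m x := by
  rw [Rq_eq]
  exact div_pos (NG_pos m (by linarith)) (NG_pos m le_rfl)

lemma Pq_pos (m : ℕ) {x : ℚ} (h : 0 ≤ x) : 0 < Pq m x := by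
  rw [Pq]
  apply Finset.prod_pos
  intro i hi
  apply Finset.prod_pos
  intro j hj
  have h1 : 1 ≤ i := (Finset.mem_Icc.1 hi).1
  have h2 : i ≤ j := (Finset.mem_Icc.1 hj).1
  have hi1 : (1:ℚ) ≤ (i:ℚ) := by exact_mod_cast h1
  have hij : (i:ℚ) ≤ (j:ℚ) := by exact_mod_cast h2
  apply div_pos <;> linarith

lemma RR (m : ℕ) {x : ℚ} (hx : 0 ≤ x) :
    Rq (m+1) x * ((2*x+(m:ℚ)+1) * ((2*(m:ℚ)+1)*(2*(m:ℚ)+2)))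
      = Rq m x * ((2*x+2*(m:ℚ)+1) * ((2*x+2*(m:ℚ)+2)*((m:ℚ)+1))) := by
  have h2 := NG_rec m (2*x)
  have h0 := NG_rec m 0
  have n0 : NG m 0 ≠ 0 := (NG_pos m le_rfl).ne'
  have n1 : NG (m+1) 0 ≠ 0 := (NG_pos (m+1) le_rfl).ne'
  have hd : (2*x+(m:ℚ)+1) ≠ 0 := by positivity
  have hm1 : ((m:ℚ)+1) ≠ 0 := by positivity
  have e2 : NG (m+1) (2*x) = NG m (2*x) * ((2*x+2*(m:ℚ)+1)*(2*x+2*(m:ℚ)+2)) / (2*x+(m:ℚ)+1) := by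
    field_simp
    linear_combination h2
  have e0 : NG (m+1) 0 = NG m 0 * ((2*(m:ℚ)+1)*(2*(m:ℚ)+2)) / ((m:ℚ)+1) := by
    rw [eq_div_iff hm1]
    linear_combination h0
  rw [Rq_eq, Rq_eq, e2, e0]
  field_simp

lemma Icc10 : (Icc 1 0 : Finset ℕ) = ∅ := by decide

lemma Pq_zero_m (x : ℚ) : Pq 0 x = 1 := by simp [Pq, Icc10]
lemma Pq_one_m (x : ℚ) : Pq 1 x = 1 := by simp [Pq, Icc10]
lemma Rq_zero_m (x : ℚ) : Rq 0 x = 1 := by simp [Rq, Icc10]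

lemma Rq_one_m (x : ℚ) : Rq 1 x = (2*x+2)/2 := by
  rw [Rq, Finset.Icc_self, Finset.prod_singleton]
  push_cast
  ring_nf

lemma Rq_two_m (x : ℚ) : Rq 2 x = ((2*x+3)*(2*x+4))/12 := by
  rw [Rq, show (2:ℕ) = 1+1 from rfl, Finset.prod_Icc_succ_top (by omega),
    Finset.Icc_self, Finset.prod_singleton]
  push_cast
  ring

lemma L1 (m : ℕ) (x : ℚ) : Pq (m+1) x = Pq m x * Rq m x := by
  cases m with
  | zero => rw [Pq_one_m, Pq_zero_m, Rq_zero_m]; norm_num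
  | succ M =>
    rw [Pq, Pq, Rq]
    have hred : (M+1+1-1 : ℕ) = M+1 := rfl
    have hred2 : (M+1-1 : ℕ) = M := rfl
    rw [hred, hred2]
    have inner : ∀ i ∈ Icc 1 (M+1),
        (∏ j ∈ Icc i (M+1), (2*x + i + j)/((i:ℚ) + j))
          = (∏ j ∈ Icc i M, (2*x + i + j)/((i:ℚ) + j))
              * ((2*x + i + (M+1:ℕ))/((i:ℚ) + (M+1:ℕ))) := by
      intro i hi
      rw [Finset.prod_Icc_succ_top (by exact (Finset.mem_Icc.1 hi).2)]
    rw [Finset.prod_congr rfl inner, Finset.prod_mul_distrib]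
    congr 1
    rw [Finset.prod_Icc_succ_top (by omega), Finset.Icc_eq_empty (by omega : ¬ (M+1 ≤ M)),
      Finset.prod_empty, mul_one]

lemma NEW (m : ℕ) {x : ℚ} (hx : 1 ≤ x) :
    Rq m (x+1) * Rq (m+2) (x-1) * ((2*x+(m:ℚ)+2)*(2*(m:ℚ)+3))
      = Rq (m+1) x ^2 * ((2*x+(m:ℚ)+1)*(2*(m:ℚ)+1)) := by
  induction m with
  | zero =>
    rw [Rq_zero_m, Rq_two_m, Rq_one_m]
    push_cast
    ring
  | succ m IH =>
    have h0x : (0:ℚ) ≤ x := by linarith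
    have h1 := RR m (by linarith : (0:ℚ) ≤ x + 1)
    have h2 := RR (m+2) (by linarith : (0:ℚ) ≤ x - 1)
    have h3 := RR (m+1) h0x
    have hmq : (0:ℚ) ≤ (m:ℚ) := Nat.cast_nonneg m
    have hA : Rq m (x+1) ≠ 0 := (Rq_pos m (by linarith)).ne'
    have hB : Rq (m+2) (x-1) ≠ 0 := (Rq_pos (m+2) (by linarith)).ne'
    have hC : Rq (m+1) x ≠ 0 := (Rq_pos (m+1) h0x).ne'
    have d1 : Rq (m+1) (x+1) = Rq m (x+1) *
        ((2*(x+1)+2*(m:ℚ)+1) * ((2*(x+1)+2*(m:ℚ)+2)*((m:ℚ)+1)))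
          / ((2*(x+1)+(m:ℚ)+1) * ((2*(m:ℚ)+1)*(2*(m:ℚ)+2))) := by
      rw [eq_div_iff (by positivity)]
      linear_combination h1
    have p1 : (0:ℚ) < 2*(x-1)+((m:ℚ)+2)+1 := by nlinarith
    have p2 : (0:ℚ) < 2*((m:ℚ)+2)+1 := by nlinarith
    have p3 : (0:ℚ) < 2*((m:ℚ)+2)+2 := by nlinarith
    have d2 : Rq (m+3) (x-1) = Rq (m+2) (x-1) *
        ((2*(x-1)+2*((m:ℚ)+2)+1) * ((2*(x-1)+2*((m:ℚ)+2)+2)*((m:ℚ)+2+1)))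
          / ((2*(x-1)+((m:ℚ)+2)+1) * ((2*((m:ℚ)+2)+1)*(2*((m:ℚ)+2)+2))) := by
      rw [eq_div_iff (ne_of_gt (mul_pos p1 (mul_pos p2 p3)))]
      push_cast at h2 ⊢
      linear_combination h2
    have d3 : Rq (m+2) x = Rq (m+1) x *
        ((2*x+2*((m:ℚ)+1)+1) * ((2*x+2*((m:ℚ)+1)+2)*((m:ℚ)+1+1)))
          / ((2*x+((m:ℚ)+1)+1) * ((2*((m:ℚ)+1)+1)*(2*((m:ℚ)+1)+2))) := by
      rw [eq_div_iff (by positivity)]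
      push_cast at h3 ⊢
      linear_combination h3
    have d4 : Rq (m+2) (x-1) = Rq (m+1) x ^2 * ((2*x+(m:ℚ)+1)*(2*(m:ℚ)+1))
        / (Rq m (x+1) * ((2*x+(m:ℚ)+2)*(2*(m:ℚ)+3))) := by
      rw [eq_div_iff (by positivity)]
      linear_combination IH
    rw [show m+1+2 = m+3 from rfl, d1, d2, d3, d4]
    have hden1 : (2*(x+1)+(m:ℚ)+1) ≠ 0 := by positivity
    have hden2 : (2*(x-1)+((m:ℚ)+2)+1) ≠ 0 := ne_of_gt p1
    have hden3 : (2*x+((m:ℚ)+1)+1) ≠ 0 := by positivity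
    push_cast
    field_simp
    ring

lemma Pq_two_m (x : ℚ) : Pq 2 x = x + 1 := by
  rw [show (2:ℕ) = 1+1 from rfl, L1, Pq_one_m, Rq_one_m]
  ring

lemma MIaux (m : ℕ) {x : ℚ} (hx : 1 ≤ x) :
    Pq m (x+1) * Pq (m+2) (x-1) * ((2*x+(m:ℚ)+1)*(2*(m:ℚ)+1))
      = Pq (m+1) x ^2 * (x*(2*x+1)) := by
  induction m with
  | zero =>
    rw [Pq_zero_m, Pq_two_m, Pq_one_m]
    push_cast
    ring
  | succ m IH =>
    have h0x : (0:ℚ) ≤ x := by linarith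
    have hPA : Pq m (x+1) ≠ 0 := (Pq_pos m (by linarith)).ne'
    have hRA : Rq m (x+1) ≠ 0 := (Rq_pos m (by linarith)).ne'
    have hnew := NEW m hx
    have d1 : Pq (m+2) (x-1) = Pq (m+1) x ^2 * (x*(2*x+1))
        / (Pq m (x+1) * ((2*x+(m:ℚ)+1)*(2*(m:ℚ)+1))) := by
      rw [eq_div_iff (by positivity)]
      linear_combination IH
    have d2 : Rq (m+2) (x-1) = Rq (m+1) x ^2 * ((2*x+(m:ℚ)+1)*(2*(m:ℚ)+1))
        / (Rq m (x+1) * ((2*x+(m:ℚ)+2)*(2*(m:ℚ)+3))) := by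
      rw [eq_div_iff (by positivity)]
      linear_combination hnew
    rw [show m+1+2 = (m+2)+1 from rfl, L1 (m+2) (x-1), L1 m (x+1), L1 (m+1) x, d1, d2]
    push_cast
    field_simp
    ring

lemma MAaux (m : ℕ) {x : ℚ} (hx : 0 ≤ x) :
    Pq m x * Pq (m+2) x * ((2*x+(m:ℚ)+1)*((2*(m:ℚ)+1)*(2*(m:ℚ)+2)))
      = Pq (m+1) x ^2 * ((2*x+2*(m:ℚ)+1)*((2*x+2*(m:ℚ)+2)*((m:ℚ)+1))) := by
  have hrr := RR m hx
  rw [show m+2 = (m+1)+1 from rfl, L1 (m+1) x, L1 m x]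
  linear_combination (Pq m x ^2 * Rq m x) * hrr

lemma MI (m : ℕ) {x : ℚ} (hx : 1 ≤ x) :
    Pq m (x+1) * Pq (m+2) (x-1) = Pq m x * Pq (m+2) x - Pq (m+1) x ^2 := by
  have h1 := MIaux m hx
  have h2 := MAaux m (by linarith : (0:ℚ) ≤ x)
  have hk : ((2*x+(m:ℚ)+1)*((2*(m:ℚ)+1)*(2*(m:ℚ)+2))) ≠ 0 := by positivity
  refine mul_right_cancel₀ hk ?_
  linear_combination (2*(m:ℚ)+2) * h1 - h2

lemma cat_ratio (m : ℕ) :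
    ((m:ℚ)+2) * (catalan (m+1) : ℚ) = (2*(2*(m:ℚ)+1)) * (catalan m : ℚ) := by
  have h1 := Nat.succ_mul_centralBinom_succ m
  have h2 := succ_mul_catalan_eq_centralBinom m
  have h3 := succ_mul_catalan_eq_centralBinom (m+1)
  have c1 : ((m:ℚ)+1) * (Nat.centralBinom (m+1) : ℚ)
      = 2 * (2*(m:ℚ)+1) * (Nat.centralBinom m : ℚ) := by exact_mod_cast h1
  have c2 : ((m:ℚ)+1) * (catalan m : ℚ) = (Nat.centralBinom m : ℚ) := by exact_mod_cast h2
  have c3 : ((m:ℚ)+2) * (catalan (m+1) : ℚ) = (Nat.centralBinom (m+1) : ℚ) := by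
    exact_mod_cast h3
  refine mul_left_cancel₀ (show ((m:ℚ)+1) ≠ 0 by positivity) ?_
  linear_combination ((m:ℚ)+1)*c3 + c1 - (2*(2*(m:ℚ)+1))*c2

lemma Rq_at_one (m : ℕ) : Rq m 1 * ((m:ℚ)+2) = 2*(2*(m:ℚ)+1) := by
  induction m with
  | zero => rw [Rq_zero_m]; norm_num
  | succ m IH =>
    have hrr := RR m (by norm_num : (0:ℚ) ≤ 1)
    have hk : ((2*(m:ℚ)+1)*(2*(m:ℚ)+2)) ≠ 0 := by positivity
    refine mul_right_cancel₀ hk ?_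
    push_cast
    linear_combination hrr + (2*((m:ℚ)+1)*(2*(m:ℚ)+3)) * IH

lemma cat_eq_Pq_one (m : ℕ) : (catalan m : ℚ) = Pq m 1 := by
  induction m with
  | zero => rw [catalan_zero, Pq_zero_m]; norm_num
  | succ m IH =>
    have hc := cat_ratio m
    have hr := Rq_at_one m
    rw [L1, ← IH]
    refine mul_left_cancel₀ (show ((m:ℚ)+2) ≠ 0 by positivity) ?_
    linear_combination hc - (catalan m : ℚ) * hr

lemma Pq_at_zero (m : ℕ) : Pq m 0 = 1 := by
  rw [Pq]
  apply Finset.prod_eq_one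
  intro i hi
  apply Finset.prod_eq_one
  intro j hj
  have h1 : 1 ≤ i := (Finset.mem_Icc.1 hi).1
  have h2 : i ≤ j := (Finset.mem_Icc.1 hj).1
  have hi1 : (1:ℚ) ≤ (i:ℚ) := by exact_mod_cast h1
  have hij : (i:ℚ) ≤ (j:ℚ) := by exact_mod_cast h2
  rw [show 2*(0:ℚ) + i + j = (i:ℚ) + j from by ring]
  exact div_self (by linarith)

lemma detH (n : ℕ) : ∀ m, (Hk m n).det = Pq m (n:ℚ) := by
  induction n using Nat.strong_induction_on with
  | _ n IH =>
    match n, IH with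
    | 0, _ =>
      intro m
      rw [show ((0:ℕ):ℚ) = 0 from rfl, Pq_at_zero]
      exact Matrix.det_fin_zero
    | 1, _ =>
      intro m
      rw [show ((1:ℕ):ℚ) = 1 from rfl, ← cat_eq_Pq_one]
      rw [Matrix.det_fin_one]
      show (catalan ((0:Fin 1) + (0:Fin 1) + m) : ℚ) = _
      norm_num
    | (k+2), IH =>
      intro m
      have h1 : (Hk (m+2) k).det = Pq (m+2) (k:ℚ) := IH k (by omega) (m+2)
      have hne : Pq (m+2) (k:ℚ) ≠ 0 := (Pq_pos (m+2) (Nat.cast_nonneg k)).ne'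
      have hdj := hankelDJ m k (by rw [h1]; exact hne)
      rw [h1, IH (k+1) (by omega) m, IH (k+1) (by omega) (m+1),
        IH (k+1) (by omega) (m+2)] at hdj
      have hx1 : (1:ℚ) ≤ ((k:ℚ)+1) := by
        have : (0:ℚ) ≤ (k:ℚ) := Nat.cast_nonneg k
        linarith
      have hmi := MI m hx1
      rw [show ((k:ℚ)+1)+1 = ((k+2:ℕ):ℚ) from by push_cast; ring,
        show ((k:ℚ)+1)-1 = ((k:ℕ):ℚ) from by push_cast; ring,
        show ((k:ℚ)+1) = ((k+1:ℕ):ℚ) from by push_cast; ring] at hmi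
      exact mul_right_cancel₀ hne (hdj.trans hmi.symm)

/-- For every natural number `m` and positive integer `n`, the Hankel
determinant `det (C_{i+j+m})_{i,j=0}^{n-1}` equals the product over all pairs
`1 ≤ i ≤ j ≤ m-1` of `(2n+i+j)/(i+j)` (empty product for `m ≤ 1`). -/
theorem stmt4 (m n : ℕ) (hn : 1 ≤ n) :
    Matrix.det (Matrix.of fun i j : Fin n => (catalan (i + j + m) : ℚ)) =
      ∏ i ∈ Finset.Icc 1 (m - 1), ∏ j ∈ Finset.Icc i (m - 1),
        (2 * (n : ℚ) + i + j) / ((i : ℚ) + j) := by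
  exact detH n m
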